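/- Let a ∈ A and b be a nearest neighbor of a in B under the ℓ1 norm. Suppose L(v_a) is a random variable (the side length of the matching cell of a in a randomly shifted quadtree with L levels of cell sizes U/2^{i}) satisfying Pr[L(v_a) ≥ U/2^{i-1}] ≤ 2^i ||a-b||_1 / U for each level i, and L(v_a) ≤ U/2^{i_0} deterministically where the levels considered are i_0,...,0. Then E[L(v_a)] ≤ 2·L·||a-b||_1 where L is the number of levels. -/

import Mathlib

open MeasureTheory ProbabilityTheory

/-- If the (nonnegative) random variable `Lva` only takes values among the dyadic cell sizes
`U / 2 ^ i` for `i = i₀, …, 0`, and `Pr[Lva ≥ U / 2 ^ (i-1)] ≤ 2 ^ i * dist / U` for each level,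
then `E[Lva] ≤ 2 * 𝓛 * dist` where `𝓛 = i₀ + 1` is the number of levels. -/
theorem stmt_3 {Ω : Type*} [MeasureSpace Ω] [IsProbabilityMeasure (ℙ : Measure Ω)]
    (Lva : Ω → ℝ) (hint : Integrable Lva) (U dist : ℝ) (hU : 0 < U) (hdist : 0 ≤ dist)
    (i₀ : ℕ)
    (hvals : ∀ ω, ∃ i ≤ i₀, Lva ω = U / 2 ^ i)
    (htail : ∀ i : ℕ, 1 ≤ i → i ≤ i₀ + 1 →
      ℙ {ω | U / 2 ^ (i - 1) ≤ Lva ω} ≤ ENNReal.ofReal (2 ^ i * dist / U)) :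
    ∫ ω, Lva ω ≤ 2 * (i₀ + 1) * dist := by
  set g : Ω → ℝ := hint.1.mk Lva with hg
  have hgm : StronglyMeasurable g := hint.1.stronglyMeasurable_mk
  have hae : Lva =ᵐ[ℙ] g := hint.1.ae_eq_mk
  have hgmeas : Measurable g := hgm.measurable
  set S : ℕ → Set Ω := fun k => {ω | U / 2 ^ k ≤ g ω} with hS
  have hSmeas : ∀ k, MeasurableSet (S k) := fun k =>
    measurableSet_le measurable_const hgmeas
  set F : Ω → ℝ := fun ω => ∑ k ∈ Finset.range (i₀ + 1),
      (S k).indicator (fun _ => U / 2 ^ k) ω with hF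
  have hFint : Integrable F := by
    apply integrable_finset_sum
    intro k _
    exact (integrable_const (U / 2 ^ k)).indicator (hSmeas k)
  have hprob : ∀ k, ℙ (S k) = ℙ {ω | U / 2 ^ k ≤ Lva ω} := by
    intro k
    apply measure_congr
    filter_upwards [hae] with ω h
    show (U / 2 ^ k ≤ g ω) = (U / 2 ^ k ≤ Lva ω)
    rw [h]
  -- pointwise (a.e.) bound g ≤ F
  have hpt : g ≤ᵐ[ℙ] F := by
    filter_upwards [hae] with ω h
    obtain ⟨j, hj, hval⟩ := hvals ω
    have hgval : g ω = U / 2 ^ j := by rw [← h, hval]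
    have hterm : (S j).indicator (fun _ => U / 2 ^ j) ω = U / 2 ^ j := by
      rw [Set.indicator_of_mem]
      simp only [S, Set.mem_setOf_eq, hgval, le_refl]
    calc g ω = (S j).indicator (fun _ => U / 2 ^ j) ω := by rw [hterm, hgval]
      _ ≤ F ω := by
        apply Finset.single_le_sum (f := fun k =>
          (S k).indicator (fun _ => U / 2 ^ k) ω)
        · intro k _
          exact Set.indicator_nonneg (fun _ _ => by positivity) ω
        · exact Finset.mem_range.2 (Nat.lt_succ_of_le hj)
  have h1 : ∫ ω, Lva ω = ∫ ω, g ω := integral_congr_ae hae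
  have h2 : ∫ ω, g ω ≤ ∫ ω, F ω :=
    integral_mono_ae (hint.congr hae) hFint hpt
  have h3 : ∫ ω, F ω = ∑ k ∈ Finset.range (i₀ + 1),
      (U / 2 ^ k) * (ℙ (S k)).toReal := by
    rw [hF, integral_finset_sum _ (fun k _ =>
      (integrable_const (U / 2 ^ k)).indicator (hSmeas k))]
    refine Finset.sum_congr rfl fun k _ => ?_
    rw [integral_indicator_const _ (hSmeas k), smul_eq_mul, Measure.real]
    ring
  have h4 : ∀ k ∈ Finset.range (i₀ + 1),
      (U / 2 ^ k) * (ℙ (S k)).toReal ≤ 2 * dist := by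
    intro k hk
    have hk' : k + 1 ≤ i₀ + 1 := Nat.succ_le_succ (Nat.lt_succ_iff.1 (Finset.mem_range.1 hk))
    have ht := htail (k + 1) (Nat.le_add_left 1 k) hk'
    simp only [Nat.add_sub_cancel] at ht
    rw [hprob k] at *
    have hnn : 0 ≤ (2 : ℝ) ^ (k + 1) * dist / U := by positivity
    have htoReal : (ℙ {ω | U / 2 ^ k ≤ Lva ω}).toReal ≤ 2 ^ (k + 1) * dist / U := by
      have := ENNReal.toReal_mono (ENNReal.ofReal_ne_top) ht
      rwa [ENNReal.toReal_ofReal hnn] at this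
    calc (U / 2 ^ k) * (ℙ {ω | U / 2 ^ k ≤ Lva ω}).toReal
        ≤ (U / 2 ^ k) * (2 ^ (k + 1) * dist / U) := by
          apply mul_le_mul_of_nonneg_left htoReal (by positivity)
      _ = 2 * dist := by
          field_simp
          ring
  have h5 : ∑ k ∈ Finset.range (i₀ + 1), (U / 2 ^ k) * (ℙ (S k)).toReal
      ≤ (i₀ + 1) * (2 * dist) := by
    calc ∑ k ∈ Finset.range (i₀ + 1), (U / 2 ^ k) * (ℙ (S k)).toReal
        ≤ ∑ k ∈ Finset.range (i₀ + 1), (2 * dist) := Finset.sum_le_sum h4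
      _ = (i₀ + 1) * (2 * dist) := by
          rw [Finset.sum_const, Finset.card_range, nsmul_eq_mul]
          push_cast; ring
  rw [h1]
  calc ∫ ω, g ω ≤ ∫ ω, F ω := h2
    _ = _ := h3
    _ ≤ (i₀ + 1) * (2 * dist) := h5
    _ = 2 * (i₀ + 1) * dist := by ring
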